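/- Let D be a connected directed multigraph with at least one edge, with a pebble distribution p such that every vertex has nonnegative balance. If no pebbling move described by an edge of D can be made (i.e., every vertex with positive outdegree has at most one pebble), then D is a directed cycle and every vertex has exactly one pebble. -/

import Mathlib

variable {V : Type*} [DecidableEq V]

/-- Result of a pebbling move `u → v`: remove two pebbles from `u`, add one to `v`. -/
def applyMove (p : V → ℕ) (u v : V) (x : V) : ℕ :=
  (if x = u then p x - 2 else p x) + (if x = v then 1 else 0)

/-- A list of moves is a valid sequence of pebbling moves from `p` in `G`. -/
def IsValidSeq (G : SimpleGraph V) : (V → ℕ) → List (V × V) → Prop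
  | _, [] => True
  | p, m :: rest => G.Adj m.1 m.2 ∧ 2 ≤ p m.1 ∧ IsValidSeq G (applyMove p m.1 m.2) rest

/-- The distribution after executing a sequence of pebbling moves. -/
def applySeq (p : V → ℕ) : List (V × V) → V → ℕ
  | [] => p
  | m :: rest => applySeq (applyMove p m.1 m.2) rest

/-- Indegree of a vertex in a directed multigraph (multiset of directed edges). -/
def indeg (D : Multiset (V × V)) (v : V) : ℕ :=
  Multiset.card (D.filter fun e => e.2 = v)

/-- Outdegree of a vertex in a directed multigraph. -/
def outdeg (D : Multiset (V × V)) (v : V) : ℕ :=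
  Multiset.card (D.filter fun e => e.1 = v)

/-- balance(D,p,v) = p(v) + indeg_D(v) - 2·outdeg_D(v). -/
def balance (D : Multiset (V × V)) (p : V → ℕ) (v : V) : ℤ :=
  (p v : ℤ) + (indeg D v : ℤ) - 2 * (outdeg D v : ℤ)

/-- `D` is orderable under `p`: some ordering of the edge multiset of `D`
is a valid sequence of pebbling moves. -/
def Orderable (G : SimpleGraph V) (D : Multiset (V × V)) (p : V → ℕ) : Prop :=
  ∃ σ : List (V × V), (σ : Multiset (V × V)) = D ∧ IsValidSeq G p σ

/-- A directed multigraph is acyclic if its edge relation admits no directed cycle. -/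
def DAcyclic (D : Multiset (V × V)) : Prop :=
  ∀ v : V, ¬ Relation.TransGen (fun a b => (a, b) ∈ D) v v

/-- The strongly connected component of `a` in the directed multigraph `D`. -/
def SCC (D : Multiset (V × V)) (a : V) : Set V :=
  {b | Relation.ReflTransGen (fun x y => (x, y) ∈ D) a b ∧
       Relation.ReflTransGen (fun x y => (x, y) ∈ D) b a}

lemma sum_indeg [Fintype V] (D : Multiset (V × V)) :
    ∑ v, indeg D v = Multiset.card D := by
  induction D using Multiset.induction with
  | empty => simp [indeg]
  | cons a s ih =>
    simp only [indeg, Multiset.filter_cons] at *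
    have : ∀ v, Multiset.card ((if a.2 = v then {a} else 0) + Multiset.filter (fun e => e.2 = v) s)
        = (if a.2 = v then 1 else 0) + Multiset.card (Multiset.filter (fun e => e.2 = v) s) := by
      intro v; rw [Multiset.card_add]; split <;> simp
    simp only [this, Finset.sum_add_distrib, ih, Finset.sum_ite_eq, Finset.mem_univ, if_true,
      Multiset.card_cons]
    omega

lemma sum_outdeg [Fintype V] (D : Multiset (V × V)) :
    ∑ v, outdeg D v = Multiset.card D := by
  induction D using Multiset.induction with
  | empty => simp [outdeg]
  | cons a s ih =>
    simp only [outdeg, Multiset.filter_cons] at *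
    have : ∀ v, Multiset.card ((if a.1 = v then {a} else 0) + Multiset.filter (fun e => e.1 = v) s)
        = (if a.1 = v then 1 else 0) + Multiset.card (Multiset.filter (fun e => e.1 = v) s) := by
      intro v; rw [Multiset.card_add]; split <;> simp
    simp only [this, Finset.sum_add_distrib, ih, Finset.sum_ite_eq, Finset.mem_univ, if_true,
      Multiset.card_cons]
    omega


/-- A connected directed multigraph with at least one edge, nonnegative balances, and
no available pebbling move must be a directed cycle with exactly one pebble per vertex. -/
theorem stuck_configuration (D : Multiset (V × V)) (p : V → ℕ)
    (hconn : ∀ a b : V, Relation.ReflTransGen (fun x y => (x, y) ∈ D ∨ (y, x) ∈ D) a b)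
    (hedge : 1 ≤ Multiset.card D)
    (hbal : ∀ v : V, 0 ≤ balance D p v)
    (hstuck : ∀ v : V, 0 < outdeg D v → p v ≤ 1) :
    (∃ vs : List V, vs.Nodup ∧ (∀ v : V, v ∈ vs) ∧
      D = ((vs.zip (vs.rotate 1) : List (V × V)) : Multiset (V × V))) ∧
    (∀ v : V, p v = 1) := by
  -- a distinguished edge
  obtain ⟨e0, he0⟩ : ∃ e, e ∈ D := Multiset.exists_mem_of_ne_zero (by
    intro h; rw [h] at hedge; simp at hedge)
  -- every vertex is an endpoint of some edge
  have hend : ∀ v : V, ∃ e ∈ D, e.1 = v ∨ e.2 = v := by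
    intro v
    have h := hconn e0.1 v
    induction h with
    | refl => exact ⟨e0, he0, Or.inl rfl⟩
    | tail _ h2 _ =>
      rcases h2 with h | h
      · exact ⟨_, h, Or.inr rfl⟩
      · exact ⟨_, h, Or.inl rfl⟩
  -- V is finite
  haveI : Fintype V := Fintype.ofList (D.toList.map Prod.fst ++ D.toList.map Prod.snd) (by
    intro v
    obtain ⟨e, heD, hc⟩ := hend v
    rw [List.mem_append]
    rcases hc with h | h
    · exact Or.inl (List.mem_map.2 ⟨e, (Multiset.mem_toList).2 heD, h⟩)
    · exact Or.inr (List.mem_map.2 ⟨e, (Multiset.mem_toList).2 heD, h⟩))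
  -- degree balance
  have hsum : ∑ v, ((indeg D v : ℤ) - (outdeg D v : ℤ)) = 0 := by
    rw [Finset.sum_sub_distrib]
    push_cast [← Nat.cast_sum]
    rw [sum_indeg, sum_outdeg]; ring
  have hterm : ∀ v ∈ Finset.univ, (0:ℤ) ≤ (indeg D v : ℤ) - (outdeg D v : ℤ) := by
    intro v _
    rcases Nat.eq_zero_or_pos (outdeg D v) with h | h
    · simp [h]
    · have hb := hbal v
      have hp := hstuck v h
      unfold balance at hb
      omega
  have heqdeg : ∀ v : V, indeg D v = outdeg D v := by
    intro v
    have := (Finset.sum_eq_zero_iff_of_nonneg hterm).1 hsum v (Finset.mem_univ v)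
    omega
  -- every vertex has outdeg = 1 and one pebble
  have hout : ∀ v : V, outdeg D v = 1 ∧ p v = 1 := by
    intro v
    have hpos : 0 < outdeg D v := by
      obtain ⟨e, heD, hc⟩ := hend v
      rcases hc with h | h
      · have : e ∈ D.filter (fun e => e.1 = v) := Multiset.mem_filter.2 ⟨heD, h⟩
        exact Multiset.card_pos_iff_exists_mem.2 ⟨e, this⟩
      · rw [← heqdeg]
        have : e ∈ D.filter (fun e => e.2 = v) := Multiset.mem_filter.2 ⟨heD, h⟩
        exact Multiset.card_pos_iff_exists_mem.2 ⟨e, this⟩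
    have hb := hbal v
    have hp := hstuck v hpos
    have he := heqdeg v
    unfold balance at hb
    omega
  -- the successor function
  have hexu : ∀ v : V, ∃ w : V, D.filter (fun e => e.1 = v) = {(v, w)} := by
    intro v
    obtain ⟨e, he⟩ := Multiset.card_eq_one.1 (hout v).1
    have hmem : e ∈ D.filter (fun e => e.1 = v) := by rw [he]; exact Multiset.mem_singleton_self e
    have h1 : e.1 = v := (Multiset.mem_filter.1 hmem).2
    exact ⟨e.2, by rw [he, ← h1]⟩
  choose f hf using hexu
  have hmemf : ∀ v : V, (v, f v) ∈ D := by
    intro v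
    have : (v, f v) ∈ D.filter (fun e => e.1 = v) := by
      rw [hf v]; exact Multiset.mem_singleton_self _
    exact (Multiset.mem_filter.1 this).1
  have huniq : ∀ e ∈ D, e = (e.1, f e.1) := by
    intro e he
    have : e ∈ D.filter (fun e' => e'.1 = e.1) := Multiset.mem_filter.2 ⟨he, rfl⟩
    rw [hf e.1] at this
    exact Multiset.mem_singleton.1 this
  -- f is injective
  have hinj : Function.Injective f := by
    intro a b hab
    have hin : indeg D (f a) = 1 := by rw [heqdeg]; exact (hout (f a)).1
    obtain ⟨e, he⟩ := Multiset.card_eq_one.1 hin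
    have ha : (a, f a) ∈ D.filter (fun e => e.2 = f a) :=
      Multiset.mem_filter.2 ⟨hmemf a, rfl⟩
    have hb : (b, f b) ∈ D.filter (fun e => e.2 = f a) :=
      Multiset.mem_filter.2 ⟨hmemf b, by rw [hab]⟩
    rw [he] at ha hb
    have := (Multiset.mem_singleton.1 ha).trans (Multiset.mem_singleton.1 hb).symm
    exact congrArg Prod.fst this
  -- permutation, order
  have hbij : Function.Bijective f := Finite.injective_iff_bijective.1 hinj
  set g : Equiv.Perm V := Equiv.ofBijective f hbij with hg
  have hfg : ∀ k x, f^[k] x = (g ^ k) x := by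
    intro k x
    rw [← Equiv.Perm.iterate_eq_pow]
    rfl
  set m := orderOf g with hm
  have hmpos : 0 < m := orderOf_pos g
  have hiterm : ∀ x, f^[m] x = x := by
    intro x; rw [hfg, pow_orderOf_eq_one]; rfl
  set v0 := e0.1 with hv0
  -- reachability by iterates
  have hreach : ∀ b : V, ∃ k : ℕ, f^[k] v0 = b := by
    intro b
    have h := hconn v0 b
    induction h with
    | refl => exact ⟨0, rfl⟩
    | tail _ h2 ih =>
      rename_i b' c _
      obtain ⟨k, hk⟩ := ih
      rcases h2 with h | h
      · refine ⟨k + 1, ?_⟩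
        have hfb : f b' = c := congrArg Prod.snd (huniq (b', c) h).symm
        rw [Function.iterate_succ_apply', hk, hfb]
      · have hfc : f c = b' := congrArg Prod.snd (huniq (c, b') h).symm
        refine ⟨m - 1 + k, ?_⟩
        rw [Function.iterate_add_apply, hk, ← hfc, ← Function.iterate_succ_apply]
        show f^[m - 1 + 1] c = c
        rw [Nat.sub_add_cancel hmpos]
        exact hiterm c
  set n := Fintype.card V with hn
  have hnpos : 0 < n := Fintype.card_pos_iff.2 ⟨v0⟩
  -- injectivity of k ↦ f^[k] v0 on range n
  have hinjR : ∀ i < n, ∀ j < n, f^[i] v0 = f^[j] v0 → i = j := by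
    have key : ∀ i j, i ≤ j → j < n → f^[i] v0 = f^[j] v0 → i = j := by
      intro i j hij hjn hEq
      by_contra hne
      set d := j - i with hd
      have hdpos : 0 < d := by omega
      have hper : f^[d] v0 = v0 := by
        have : f^[i] (f^[d] v0) = f^[i] v0 := by
          rw [← Function.iterate_add_apply]
          rw [show i + d = j by omega]
          exact hEq.symm
        exact Function.Injective.iterate hinj i this
      have hperiodic : ∀ q, f^[d * q] v0 = v0 := by
        intro q
        induction q with
        | zero => simp
        | succ q ih =>
          rw [Nat.mul_succ, Function.iterate_add_apply, hper, ih]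
      have hsub : (Finset.univ : Finset V) ⊆ (Finset.range d).image (fun r => f^[r] v0) := by
        intro b _
        obtain ⟨k, hk⟩ := hreach b
        refine Finset.mem_image.2 ⟨k % d, Finset.mem_range.2 (Nat.mod_lt _ hdpos), ?_⟩
        rw [← hk]
        conv_rhs => rw [← Nat.mod_add_div k d]
        rw [Function.iterate_add_apply, hperiodic]
      have := Finset.card_le_card hsub
      have h2 := Finset.card_image_le (s := Finset.range d) (f := fun r => f^[r] v0)
      simp only [Finset.card_univ, Finset.card_range] at this h2
      omega
    intro i hi j hj hEq
    rcases le_or_gt i j with h | h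
    · exact key i j h hj hEq
    · exact (key j i h.le hi hEq.symm).symm
  set vs : List V := (List.range n).map (fun k => f^[k] v0) with hvs
  have hnodup : vs.Nodup := by
    refine List.Nodup.map_on ?_ (List.nodup_range (n := n))
    intro i hi j hj
    exact hinjR i (List.mem_range.1 hi) j (List.mem_range.1 hj)
  have hlen : vs.length = n := by simp [hvs]
  have hcover : ∀ v : V, v ∈ vs := by
    have : vs.toFinset = Finset.univ := by
      apply Finset.eq_univ_of_card
      rw [List.toFinset_card_of_nodup hnodup, hlen]
    intro v
    rw [← List.mem_toFinset, this]
    exact Finset.mem_univ v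
  -- the period is exactly n
  have hpern : f^[n] v0 = v0 := by
    have : f^[n] v0 ∈ vs := hcover _
    obtain ⟨k, hk, hkeq⟩ := List.mem_map.1 this
    have hkn : k < n := List.mem_range.1 hk
    rcases Nat.eq_zero_or_pos k with h0 | h0
    · rw [← hkeq, h0]; rfl
    · exfalso
      have : f^[k] (f^[n - k] v0) = f^[k] v0 := by
        rw [← Function.iterate_add_apply, show k + (n - k) = n by omega, hkeq]
      have h1 := Function.Injective.iterate hinj k this
      have := hinjR (n - k) (by omega) 0 hnpos h1
      omega
  -- vs.zip (vs.rotate 1) = vs.map (fun v => (v, f v))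
  have hzip : vs.zip (vs.rotate 1) = vs.map (fun v => (v, f v)) := by
    have hvsget : ∀ (i : ℕ) (h : i < vs.length), vs[i] = f^[i] v0 := by
      intro i h
      simp [hvs]
    have key : ∀ (i : ℕ) (h : i < vs.length), f^[(i + 1) % n] v0 = f vs[i] := by
      intro i h
      rw [hvsget i h]
      rw [show f (f^[i] v0) = f^[i + 1] v0 from (Function.iterate_succ_apply' f i v0).symm]
      rcases Nat.lt_or_ge (i + 1) n with hlt | hge
      · rw [Nat.mod_eq_of_lt hlt]
      · have hieq : i + 1 = n := by rw [hlen] at h; omega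
        rw [hieq, Nat.mod_self]
        exact hpern.symm
    apply List.ext_getElem
    · simp
    · intro i h1 h2
      have hin : i < n := by
        rw [List.length_map, hlen] at h2; exact h2
      have hz1 : i < vs.length := by rw [hlen]; exact hin
      rw [List.getElem_zip, List.getElem_map (fun v => (v, f v)), List.getElem_rotate]
      refine Prod.ext rfl ?_
      have hmodlt : (i + 1) % vs.length < vs.length := Nat.mod_lt _ (by omega)
      show vs[(i + 1) % vs.length]'hmodlt = f (vs[i]'hz1)
      rw [hvsget ((i + 1) % vs.length) hmodlt, hlen]
      exact key i hz1
  -- D equals the map multiset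
  have hcardD : Multiset.card D = n := by
    rw [← sum_outdeg D]
    calc ∑ v, outdeg D v = ∑ _v : V, 1 := Finset.sum_congr rfl (fun v _ => (hout v).1)
    _ = n := by simp [hn]
  have hDeq : D = ((vs.map (fun v => (v, f v)) : List (V × V)) : Multiset (V × V)) := by
    have hnodupM : (↑(vs.map (fun v => (v, f v))) : Multiset (V × V)).Nodup := by
      rw [Multiset.coe_nodup]
      exact List.Nodup.map_on (fun x _ y _ h => congrArg Prod.fst h) hnodup
    have hle : (↑(vs.map (fun v => (v, f v))) : Multiset (V × V)) ≤ D := by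
      rw [Multiset.le_iff_count]
      intro e
      rw [Multiset.count_eq_of_nodup hnodupM]
      split
      · rename_i hmem
        have : e ∈ D := by
          simp only [Multiset.mem_coe, List.mem_map] at hmem
          obtain ⟨v, _, rfl⟩ := hmem
          exact hmemf v
        exact Multiset.one_le_count_iff_mem.2 this
      · exact Nat.zero_le _
    symm
    apply Multiset.eq_of_le_of_card_le hle
    rw [hcardD]
    simp [hlen]
  refine ⟨⟨vs, hnodup, hcover, ?_⟩, fun v => (hout v).2⟩
  rw [hzip, hDeq]
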